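/- Let I = (i_1, …, i_s) be a sequence of positive integers satisfying 0 ≤ 2i_{j+1} − i_j < 2^{ρ(i_{j+1})} for all j < s, and let d ≥ 0 with excess e_1 = i_1 − (i_2 + ⋯ + i_s + d) satisfying 0 < e_1 < 2^{ρ(i_1)}. Then every entry i_j of I is odd. -/

import Mathlib

/-- `rho n` is the position of the lowest zero bit of `n`. -/
noncomputable def rho (n : ℕ) : ℕ := sInf {i | n.testBit i = false}

lemma rho_eq_zero_of_even {n : ℕ} (h : Even n) : rho n = 0 := by
  have h0 : n.testBit 0 = false := by
    simp [Nat.testBit_zero, Nat.even_iff.mp h]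
  exact Nat.sInf_eq_zero.mpr (Or.inl h0)

open Finset in
/-- If `I = (i 0, …, i (s-1))` satisfies `0 ≤ 2 i (j+1) - i j < 2 ^ rho (i (j+1))`
for all `j < s - 1` and the excess `e₁ = i 0 - (i 1 + ⋯ + i (s-1) + d)` satisfies
`0 < e₁ < 2 ^ rho (i 0)`, then every entry `i j` is odd. -/
theorem stmt_8 (s : ℕ) (hs : 1 ≤ s) (i : ℕ → ℕ) (hpos : ∀ j < s, 0 < i j)
    (d : ℕ)
    (hadm : ∀ j, j + 1 < s → (0 : ℤ) ≤ 2 * (i (j + 1) : ℤ) - i j)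
    (hcurtis : ∀ j, j + 1 < s → 2 * (i (j + 1) : ℤ) - i j < 2 ^ rho (i (j + 1)))
    (e₁ : ℤ) (he : e₁ = (i 0 : ℤ) - ((∑ k ∈ Finset.Ico 1 s, (i k : ℤ)) + d))
    (he₁ : 0 < e₁) (he₂ : e₁ < 2 ^ rho (i 0)) :
    ∀ j < s, Odd (i j) := by
  have h0 : Odd (i 0) := by
    by_contra hev
    rw [Nat.not_odd_iff_even] at hev
    rw [rho_eq_zero_of_even hev] at he₂
    simp at he₂
    omega
  intro j hj
  induction j with
  | zero => exact h0
  | succ k ih =>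
    have hk : Odd (i k) := ih (by omega)
    by_contra hev
    rw [Nat.not_odd_iff_even] at hev
    have h1 := hadm k hj
    have h2 := hcurtis k hj
    rw [rho_eq_zero_of_even hev] at h2
    have : (i k : ℤ) = 2 * (i (k + 1) : ℤ) := by
      simp at h2; omega
    have : Even (i k) := by
      have : Even ((i k : ℤ)) := ⟨i (k+1), by omega⟩
      exact_mod_cast this
    exact (Nat.not_even_iff_odd.mpr hk) this
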